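/- Let x ≥ 1 be an integer, let t, α₁,…,α_{x-1}, γ₁,…,γ_x ∈ ℂ, and let z, s, w ∈ ℂ with z ≠ 0, z² ≠ 1, s² = -t and w² = z. Then (-s·w) · ∏_{k=1}^{x-1}((1-α_kγ_k)z + α_k) · ∏_{k=1}^{x}(1-γ_k z⁻¹) + w⁻¹ · (tγ_x z + 1) · ∏_{k=1}^{x-1}((1-α_kγ_k)z⁻¹ + α_k)(1-γ_k z) + (t+1)z · w⁻¹ · Σ_{j=1}^{x-1} [ ∏_{k=1}^{j-1}((1-α_kγ_k)z⁻¹ + α_k)(1-γ_k z) ] · [ ∏_{k=j+1}^{x-1}((1-α_kγ_k)z + α_k) ] · [ ∏_{k=j+1}^{x}(1-γ_k z⁻¹) ] = w(1-sz)/(z²-1) · [ (z + s) ∏_{j=1}^{x-1}(α_j + (1-α_jγ_j)z) ∏_{j=1}^{x}(1-γ_j z⁻¹) − (z⁻¹ + s) ∏_{j=1}^{x-1}(α_j + (1-α_jγ_j)z⁻¹) ∏_{j=1}^{x}(1-γ_j z) ]. -/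

import Mathlib

open Finset in
private lemma telescope (u v : ℕ → ℂ) (n : ℕ) :
    ∑ j ∈ Icc 1 n, (∏ k ∈ Icc 1 (j - 1), u k) * (∏ k ∈ Icc (j + 1) n, v k) * (u j - v j)
      = (∏ k ∈ Icc 1 n, u k) - ∏ k ∈ Icc 1 n, v k := by
  induction n with
  | zero => simp
  | succ n ih =>
    rw [Finset.sum_Icc_succ_top (by omega)]
    have h1 : ∀ j ∈ Icc 1 n,
        (∏ k ∈ Icc 1 (j - 1), u k) * (∏ k ∈ Icc (j + 1) (n + 1), v k) * (u j - v j)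
        = (∏ k ∈ Icc 1 (j - 1), u k) * (∏ k ∈ Icc (j + 1) n, v k) * (u j - v j) * v (n + 1) := by
      intro j hj
      simp only [mem_Icc] at hj
      rw [Finset.prod_Icc_succ_top (by omega)]
      ring
    have htop : (∏ k ∈ Icc 1 (n + 1 - 1), u k) * (∏ k ∈ Icc (n + 1 + 1) (n + 1), v k) *
        (u (n + 1) - v (n + 1)) = (∏ k ∈ Icc 1 n, u k) * (u (n + 1) - v (n + 1)) := by
      rw [Finset.Icc_eq_empty (show ¬ n + 1 + 1 ≤ n + 1 by omega), Finset.prod_empty,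
        Nat.add_sub_cancel, mul_one]
    rw [Finset.sum_congr rfl h1, ← Finset.sum_mul, ih, htop,
      Finset.prod_Icc_succ_top (show 1 ≤ n + 1 by omega) u,
      Finset.prod_Icc_succ_top (show 1 ≤ n + 1 by omega) v]
    ring


/-- Proposition 6.1 of the paper: closed form of the one-particle
type II wavefunction of the free-fermionic six-vertex model under reflecting boundary,
with the Brubaker–Bump–Chinta–Gunnells diagonal K-matrix. Here `s` plays the role of
`√(-t)` and `w` that of `z^{1/2}`, and `α γ : ℕ → ℂ` give the parameters
`α₁,…,α_{x-1}` and `γ₁,…,γ_x`. -/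
theorem one_particle_typeII (x : ℕ) (hx : 1 ≤ x) (t : ℂ) (α γ : ℕ → ℂ)
    (z s w : ℂ) (hz : z ≠ 0) (hz2 : z ^ 2 ≠ 1) (hs : s ^ 2 = -t) (hw : w ^ 2 = z) :
    (-(s * w)) *
        (∏ k ∈ Finset.Icc 1 (x - 1), ((1 - α k * γ k) * z + α k)) *
        (∏ k ∈ Finset.Icc 1 x, (1 - γ k * z⁻¹))
      + w⁻¹ * (t * γ x * z + 1) *
        (∏ k ∈ Finset.Icc 1 (x - 1), ((1 - α k * γ k) * z⁻¹ + α k) * (1 - γ k * z))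
      + (t + 1) * z * w⁻¹ *
        ∑ j ∈ Finset.Icc 1 (x - 1),
          (∏ k ∈ Finset.Icc 1 (j - 1), ((1 - α k * γ k) * z⁻¹ + α k) * (1 - γ k * z)) *
          (∏ k ∈ Finset.Icc (j + 1) (x - 1), ((1 - α k * γ k) * z + α k)) *
          (∏ k ∈ Finset.Icc (j + 1) x, (1 - γ k * z⁻¹))
    = w * (1 - s * z) / (z ^ 2 - 1) *
        ((z + s) * (∏ j ∈ Finset.Icc 1 (x - 1), (α j + (1 - α j * γ j) * z)) *
            (∏ j ∈ Finset.Icc 1 x, (1 - γ j * z⁻¹))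
          - (z⁻¹ + s) * (∏ j ∈ Finset.Icc 1 (x - 1), (α j + (1 - α j * γ j) * z⁻¹)) *
            (∏ j ∈ Finset.Icc 1 x, (1 - γ j * z))) := by
  obtain ⟨n, rfl⟩ : ∃ n, x = n + 1 := ⟨x - 1, by omega⟩
  have ht : t = -s ^ 2 := by linear_combination hs
  subst ht
  subst hw
  simp only [Nat.add_sub_cancel]
  have hw0 : w ≠ 0 := by
    intro h; exact hz (by rw [h]; ring)
  have h2 : (w ^ 2) ^ 2 - 1 ≠ 0 := sub_ne_zero.mpr hz2
  have h1 : (w ^ 2)⁻¹ - w ^ 2 ≠ 0 := by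
    intro h
    apply h2
    have h' := congrArg (· * w ^ 2) h
    simp only [sub_mul, inv_mul_cancel₀ hz, zero_mul] at h'
    linear_combination -h'
  -- telescoping identity
  have huv : ∀ j : ℕ, ((1 - α j * γ j) * (w ^ 2)⁻¹ + α j) * (1 - γ j * w ^ 2)
      - ((1 - α j * γ j) * w ^ 2 + α j) * (1 - γ j * (w ^ 2)⁻¹) = (w ^ 2)⁻¹ - w ^ 2 := by
    intro j
    field_simp
    ring
  have htel := telescope (fun k => ((1 - α k * γ k) * (w ^ 2)⁻¹ + α k) * (1 - γ k * w ^ 2))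
      (fun k => ((1 - α k * γ k) * w ^ 2 + α k) * (1 - γ k * (w ^ 2)⁻¹)) n
  simp only [huv] at htel
  rw [← Finset.sum_mul, Finset.prod_mul_distrib, Finset.prod_mul_distrib] at htel
  -- rewrite the sum in the goal
  have hsum : ∀ j ∈ Finset.Icc 1 n,
      (∏ k ∈ Finset.Icc 1 (j - 1), ((1 - α k * γ k) * (w ^ 2)⁻¹ + α k) * (1 - γ k * w ^ 2)) *
      (∏ k ∈ Finset.Icc (j + 1) n, ((1 - α k * γ k) * w ^ 2 + α k)) *
      (∏ k ∈ Finset.Icc (j + 1) (n + 1), (1 - γ k * (w ^ 2)⁻¹))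
      = (∏ k ∈ Finset.Icc 1 (j - 1), ((1 - α k * γ k) * (w ^ 2)⁻¹ + α k) * (1 - γ k * w ^ 2)) *
        (∏ k ∈ Finset.Icc (j + 1) n, ((1 - α k * γ k) * w ^ 2 + α k) * (1 - γ k * (w ^ 2)⁻¹)) *
        (1 - γ (n + 1) * (w ^ 2)⁻¹) := by
    intro j hj
    simp only [Finset.mem_Icc] at hj
    rw [Finset.prod_Icc_succ_top (show j + 1 ≤ n + 1 by omega),
      Finset.prod_mul_distrib (s := Finset.Icc (j + 1) n)
        (f := fun k => (1 - α k * γ k) * w ^ 2 + α k)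
        (g := fun k => 1 - γ k * (w ^ 2)⁻¹)]
    ring
  rw [Finset.sum_congr rfl hsum, ← Finset.sum_mul]
  -- rewrite the length-(n+1) products
  rw [Finset.prod_Icc_succ_top (show 1 ≤ n + 1 by omega) (fun k => 1 - γ k * (w ^ 2)⁻¹),
    Finset.prod_Icc_succ_top (show 1 ≤ n + 1 by omega) (fun k => 1 - γ k * (w ^ 2)),
    Finset.prod_mul_distrib,
    show (∏ j ∈ Finset.Icc 1 n, (α j + (1 - α j * γ j) * w ^ 2))
      = ∏ j ∈ Finset.Icc 1 n, ((1 - α j * γ j) * w ^ 2 + α j) from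
      Finset.prod_congr rfl fun k _ => by ring,
    show (∏ j ∈ Finset.Icc 1 n, (α j + (1 - α j * γ j) * (w ^ 2)⁻¹))
      = ∏ j ∈ Finset.Icc 1 n, ((1 - α j * γ j) * (w ^ 2)⁻¹ + α j) from
      Finset.prod_congr rfl fun k _ => by ring]
  set G1 := ∏ k ∈ Finset.Icc 1 n, ((1 - α k * γ k) * w ^ 2 + α k) with hG1
  set G2 := ∏ k ∈ Finset.Icc 1 n, ((1 - α k * γ k) * (w ^ 2)⁻¹ + α k) with hG2
  set C1 := ∏ k ∈ Finset.Icc 1 n, (1 - γ k * (w ^ 2)⁻¹) with hC1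
  set C2 := ∏ k ∈ Finset.Icc 1 n, (1 - γ k * w ^ 2) with hC2
  set E := ∑ j ∈ Finset.Icc 1 n,
      (∏ k ∈ Finset.Icc 1 (j - 1), ((1 - α k * γ k) * (w ^ 2)⁻¹ + α k) * (1 - γ k * w ^ 2)) *
      (∏ k ∈ Finset.Icc (j + 1) n, ((1 - α k * γ k) * w ^ 2 + α k) * (1 - γ k * (w ^ 2)⁻¹))
    with hEdef
  set c := γ (n + 1) with hc
  -- htel : E * ((w^2)⁻¹ - w^2) = G2 * C2 - G1 * C1
  have h4 : (1 : ℂ) - w ^ 4 ≠ 0 := by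
    intro h
    exact hz2 (by linear_combination -h)
  have hd : (w ^ 2)⁻¹ - w ^ 2 = (1 - w ^ 4) / w ^ 2 := by
    field_simp
  have hE : E = (G2 * C2 - G1 * C1) * (w ^ 2 / (1 - w ^ 4)) := by
    rw [show w ^ 2 / (1 - w ^ 4) = ((1 - w ^ 4) / w ^ 2)⁻¹ by rw [inv_div], ← hd]
    exact (eq_mul_inv_iff_mul_eq₀ h1).mpr htel
  rw [hE, show w ^ 2 / (1 - w ^ 4) = -(w ^ 2 / ((w ^ 2) ^ 2 - 1)) by
    rw [← div_neg]; congr 1; ring]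
  have h5 : w ^ 4 - 1 ≠ 0 := by
    intro h; exact h2 (by linear_combination h)
  field_simp
  ring
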